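/- If the true one-step transition probabilities T(x,a,q') of a continuous-state system satisfy P̌(q,a,q') ≤ T(x,a,q') ≤ P̂(q,a,q') for all x in region q (i.e., the IMDP abstraction is sound), then for any finite horizon k and any stationary policy π defined on abstract states, the probability that the continuous system reaches a set of bad regions within k steps is at most the maximum over adversaries of the corresponding k-step reachability probability in the IMDP under π. -/
import Mathlib


open Finset

/-- `k`-step probability that the concrete system (state space `Y`, kernel `T`),
controlled by abstract policy `π` lifted through projection `ρ`, reaches a bad
abstract region in `B`. -/
noncomputable def creach {Y Q U : Type*} [Fintype Y] (B : Set Q) [DecidablePred (· ∈ B)]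
    (ρ : Y → Q) (T : Y → U → Y → ℝ) (π : Q → U) : ℕ → Y → ℝ
  | 0 => fun y => if ρ y ∈ B then 1 else 0
  | k + 1 => fun y => if ρ y ∈ B then 1 else
      ∑ y', T y (π (ρ y)) y' * creach B ρ T π k y'

/-- `k`-step worst-case (over adversaries) probability of reaching `B` in the IMDP
abstraction with interval bounds `Pl, Ph` under policy `π`. -/
noncomputable def areach {Q U : Type*} [Fintype Q] (B : Set Q) [DecidablePred (· ∈ B)]
    (Pl Ph : Q → U → Q → ℝ) (π : Q → U) : ℕ → Q → ℝ
  | 0 => fun q => if q ∈ B then 1 else 0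
  | k + 1 => fun q => if q ∈ B then 1 else
      sSup {r | ∃ d : Q → ℝ,
        (∀ q', Pl q (π q) q' ≤ d q' ∧ d q' ≤ Ph q (π q) q') ∧ (∑ q', d q' = 1) ∧
        r = ∑ q', d q' * areach B Pl Ph π k q'}

theorem sound_abstraction_upper_bounds_reachability
    {Y Q U : Type*} [Fintype Y] [Fintype Q] [DecidableEq Q]
    (B : Set Q) [DecidablePred (· ∈ B)]
    (ρ : Y → Q) (T : Y → U → Y → ℝ)
    (hT : ∀ y a, (∀ y', 0 ≤ T y a y') ∧ ∑ y', T y a y' = 1)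
    (Pl Ph : Q → U → Q → ℝ)
    (hsound : ∀ (y : Y) (a : U) (q' : Q),
      Pl (ρ y) a q' ≤ ∑ y' ∈ Finset.univ.filter (fun y' => ρ y' = q'), T y a y' ∧
      ∑ y' ∈ Finset.univ.filter (fun y' => ρ y' = q'), T y a y' ≤ Ph (ρ y) a q')
    (π : Q → U) :
    ∀ (k : ℕ) (y : Y), creach B ρ T π k y ≤ areach B Pl Ph π k (ρ y) := by
  intro k
  induction k with
  | zero => intro y; simp [creach, areach]
  | succ k ih =>
    intro y
    by_cases hb : ρ y ∈ B
    · simp [creach, areach, hb]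
    · have hc : creach B ρ T π (k+1) y
          = ∑ y', T y (π (ρ y)) y' * creach B ρ T π k y' := by
        simp [creach, hb]
      have haEq : areach B Pl Ph π (k+1) (ρ y)
          = sSup {r | ∃ d : Q → ℝ,
              (∀ q', Pl (ρ y) (π (ρ y)) q' ≤ d q' ∧ d q' ≤ Ph (ρ y) (π (ρ y)) q') ∧
              (∑ q', d q' = 1) ∧
              r = ∑ q', d q' * areach B Pl Ph π k q'} := by
        simp [areach, hb]
      set a := π (ρ y) with ha
      set d : Q → ℝ := fun q' => ∑ y' ∈ Finset.univ.filter (fun y' => ρ y' = q'), T y a y'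
        with hd
      have hdsum : ∑ q', d q' = 1 := by
        rw [hd]; rw [Finset.sum_fiberwise Finset.univ ρ (T y a)]; exact (hT y a).2
      have hdbd : ∀ q', Pl (ρ y) a q' ≤ d q' ∧ d q' ≤ Ph (ρ y) a q' := fun q' => hsound y a q'
      have hmem : (∑ q', d q' * areach B Pl Ph π k q') ∈
          {r | ∃ d : Q → ℝ,
              (∀ q', Pl (ρ y) a q' ≤ d q' ∧ d q' ≤ Ph (ρ y) a q') ∧
              (∑ q', d q' = 1) ∧
              r = ∑ q', d q' * areach B Pl Ph π k q'} := ⟨d, hdbd, hdsum, rfl⟩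
      have hbdd : BddAbove {r | ∃ d : Q → ℝ,
              (∀ q', Pl (ρ y) a q' ≤ d q' ∧ d q' ≤ Ph (ρ y) a q') ∧
              (∑ q', d q' = 1) ∧
              r = ∑ q', d q' * areach B Pl Ph π k q'} := by
        refine ⟨∑ q', (|Pl (ρ y) a q'| + |Ph (ρ y) a q'|) * |areach B Pl Ph π k q'|, ?_⟩
        rintro r ⟨e, he, -, rfl⟩
        calc ∑ q', e q' * areach B Pl Ph π k q'
            ≤ ∑ q', |e q' * areach B Pl Ph π k q'| :=
              Finset.sum_le_sum fun q' _ => le_abs_self _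
          _ ≤ ∑ q', (|Pl (ρ y) a q'| + |Ph (ρ y) a q'|) * |areach B Pl Ph π k q'| := by
              refine Finset.sum_le_sum fun q' _ => ?_
              rw [abs_mul]
              refine mul_le_mul_of_nonneg_right ?_ (abs_nonneg _)
              rcases he q' with ⟨h1, h2⟩
              rcases abs_cases (e q') with ⟨h3, _⟩ | ⟨h3, _⟩
              · have := le_abs_self (Ph (ρ y) a q')
                have := abs_nonneg (Pl (ρ y) a q')
                linarith
              · have := neg_abs_le (Pl (ρ y) a q')
                have := abs_nonneg (Ph (ρ y) a q')
                linarith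
      have h1 : ∑ y', T y a y' * creach B ρ T π k y'
          ≤ ∑ q', d q' * areach B Pl Ph π k q' := by
        calc ∑ y', T y a y' * creach B ρ T π k y'
            ≤ ∑ y', T y a y' * areach B Pl Ph π k (ρ y') :=
              Finset.sum_le_sum fun y' _ =>
                mul_le_mul_of_nonneg_left (ih y') ((hT y a).1 y')
          _ = ∑ q', d q' * areach B Pl Ph π k q' := by
              rw [hd]
              simp only [Finset.sum_mul]
              rw [← Finset.sum_fiberwise Finset.univ ρ
                (fun y' => T y a y' * areach B Pl Ph π k (ρ y'))]
              refine Finset.sum_congr rfl fun q' _ => Finset.sum_congr rfl fun y' hy' => ?_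
              simp only [Finset.mem_filter] at hy'
              rw [hy'.2]
      rw [hc, haEq]
      exact h1.trans (le_csSup hbdd hmem)
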